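/- Let S be a finite set, let P be a stochastic matrix on S in detailed balance with a probability distribution π on S, and let X ⊆ S be such that P_{ss} < 1 for every s ∈ S∖X. Define P' by: (P')_{ss'} = P_{ss'} if s ∈ X; (P')_{ss'} = P_{ss'}/(1 − P_{ss}) if s ∈ S∖X and s' ≠ s; and (P')_{ss} = 0 if s ∈ S∖X. Then P' is a stochastic matrix, and P' is in detailed balance with the (unnormalized) measure π' given by π'_s = π_s for s ∈ X and π'_s = (1 − P_{ss}) π_s for s ∈ S∖X; that is, π'_s (P')_{ss'} = π'_{s'} (P')_{s's} for all s,s' ∈ S. -/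

import Mathlib

open Finset

/-- The rejection-free modification of `P` outside `X`: identity transitions from states of
`S ∖ X` are forbidden and the remaining transition probabilities are rescaled. -/
noncomputable def rejFree {S : Type*} [Fintype S] [DecidableEq S]
    (P : Matrix S S ℝ) (X : Finset S) : Matrix S S ℝ :=
  Matrix.of fun s s' =>
    if s ∈ X then P s s'
    else if s' = s then 0 else P s s' / (1 - P s s)

theorem rejection_free_stochastic_and_detailed_balance
    {S : Type*} [Fintype S] [DecidableEq S]
    (P : Matrix S S ℝ) (pd : S → ℝ)
    (hPnn : ∀ s s', 0 ≤ P s s')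
    (hProw : ∀ s, ∑ s', P s s' = 1)
    (hpdnn : ∀ s, 0 ≤ pd s)
    (hpdsum : ∑ s, pd s = 1)
    (hdb : ∀ s s', pd s * P s s' = pd s' * P s' s)
    (X : Finset S) (hdiag : ∀ s ∉ X, P s s < 1) :
    (∀ s s', 0 ≤ rejFree P X s s') ∧
    (∀ s, ∑ s', rejFree P X s s' = 1) ∧
    (∀ s s',
      (if s ∈ X then pd s else (1 - P s s) * pd s) * rejFree P X s s' =
        (if s' ∈ X then pd s' else (1 - P s' s') * pd s') * rejFree P X s' s) := by
  refine ⟨?_, ?_, ?_⟩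
  · intro s s'
    simp only [rejFree, Matrix.of_apply]
    split_ifs with h1 h2
    · exact hPnn s s'
    · exact le_refl 0
    · exact div_nonneg (hPnn s s') (by linarith [hdiag s h1])
  · intro s
    simp only [rejFree, Matrix.of_apply]
    by_cases h : s ∈ X
    · simp [h, hProw s]
    · have hpos : (0:ℝ) < 1 - P s s := by linarith [hdiag s h]
      simp only [h, if_false]
      have hsum : (∑ x, if x = s then (0:ℝ) else P s x / (1 - P s s)) =
          ∑ x ∈ Finset.univ.erase s, P s x / (1 - P s s) := by
        rw [← Finset.sum_erase (a := s) (f := fun x => if x = s then (0:ℝ) else P s x / (1 - P s s))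
          Finset.univ (by simp)]
        exact Finset.sum_congr rfl fun x hx => if_neg (Finset.ne_of_mem_erase hx)
      rw [hsum, ← Finset.sum_div, Finset.sum_erase_eq_sub (Finset.mem_univ s), hProw s]
      field_simp
  · intro s s'
    simp only [rejFree, Matrix.of_apply]
    by_cases hss : s' = s
    · subst hss
      split_ifs <;> ring
    · by_cases hs : s ∈ X <;> by_cases hs' : s' ∈ X <;>
        simp only [hs, hs', if_true, if_false, if_neg hss, if_neg (Ne.symm hss)]
      · exact hdb s s'
      · have h1 : (1:ℝ) - P s' s' ≠ 0 := by linarith [hdiag s' hs']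
        field_simp
        linear_combination hdb s s'
      · have h1 : (1:ℝ) - P s s ≠ 0 := by linarith [hdiag s hs]
        field_simp
        linear_combination hdb s s'
      · have h1 : (1:ℝ) - P s s ≠ 0 := by linarith [hdiag s hs]
        have h2 : (1:ℝ) - P s' s' ≠ 0 := by linarith [hdiag s' hs']
        field_simp
        linear_combination hdb s s'
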